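/- arXiv:2401.12345 — 6 statements merged into one kernel-verified Lean document; each statement's English description precedes it below -/
import Mathlib

section
/- Let R_1, R_2 ∈ ℂ^{(N+M)×(N+M)} be Hermitian positive semidefinite matrices written in block form R_i = [[R_{i,x}, R_{i,xs}],[R_{i,xs}ᴴ, R_{i,s}]] with R_{1,x}, R_{2,x} ∈ ℂ^{N×N} positive definite. If R_1 ⪰ R_2 (i.e., R_1 − R_2 is positive semidefinite), then f1(R_1) ≥ f1(R_2); that is, Tr(R_{1,s} − R_{1,xs}ᴴ R_{1,x}⁻¹ R_{1,xs}) ≥ Tr(R_{2,s} − R_{2,xs}ᴴ R_{2,x}⁻¹ R_{2,xs}). -/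
open Matrix
open scoped ComplexOrder

/-- The MMSE functional `f1(R) := Tr(R_s − R_xsᴴ R_x⁻¹ R_xs)` of a Hermitian block matrix
`R = [[R_x, R_xs],[R_xsᴴ, R_s]]`. -/
noncomputable def f1 {N M : ℕ} (R : Matrix (Fin N ⊕ Fin M) (Fin N ⊕ Fin M) ℂ) : ℝ :=
  ((R.toBlocks₂₂ - (R.toBlocks₁₂)ᴴ * (R.toBlocks₁₁)⁻¹ * R.toBlocks₁₂).trace).re

lemma trace_re_nonneg' {n : ℕ} {A : Matrix (Fin n) (Fin n) ℂ} (hA : A.PosSemidef) :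
    0 ≤ A.trace.re := by
  rw [Matrix.trace]
  have h : ∀ i, 0 ≤ (A i i).re := by
    intro i
    have := hA.diag_nonneg (i := i)
    exact (Complex.nonneg_iff.mp this).1
  calc (0:ℝ) ≤ ∑ i, (A.diag i).re := Finset.sum_nonneg fun i _ => h i
  _ = (∑ i, A.diag i).re := by rw [Complex.re_sum]

lemma expand_lemma {n m : ℕ} (A : Matrix (Fin n) (Fin n) ℂ) (B : Matrix (Fin n) (Fin m) ℂ)
    (C : Matrix (Fin m) (Fin m) ℂ) (K : Matrix (Fin n) (Fin m) ℂ)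
    (hA : A.IsHermitian) (hU : IsUnit A.det) :
    C - Kᴴ*B - Bᴴ*K + Kᴴ*A*K
      = (C - Bᴴ*A⁻¹*B) + (K - A⁻¹*B)ᴴ*A*(K - A⁻¹*B) := by
  have hinv : A⁻¹ᴴ = A⁻¹ := by rw [Matrix.conjTranspose_nonsing_inv, hA.eq]
  have h1 : A * A⁻¹ = 1 := Matrix.mul_nonsing_inv A hU
  have h2 : A⁻¹ * A = 1 := Matrix.nonsing_inv_mul A hU
  have h3 : ∀ X : Matrix (Fin n) (Fin m) ℂ, A * (A⁻¹ * X) = X := fun X => by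
    rw [← Matrix.mul_assoc, h1, Matrix.one_mul]
  have h4 : ∀ X : Matrix (Fin n) (Fin m) ℂ, A⁻¹ * (A * X) = X := fun X => by
    rw [← Matrix.mul_assoc, h2, Matrix.one_mul]
  simp only [Matrix.conjTranspose_sub, Matrix.conjTranspose_mul, hinv,
    Matrix.sub_mul, Matrix.mul_sub, Matrix.mul_assoc, h3, h4]
  abel

lemma g_eq {N M : ℕ} (R : Matrix (Fin N ⊕ Fin M) (Fin N ⊕ Fin M) ℂ)
    (hR : R.IsHermitian) (K : Matrix (Fin N) (Fin M) ℂ) :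
    (fromRows (-K) (1 : Matrix (Fin M) (Fin M) ℂ))ᴴ * R *
      (fromRows (-K) (1 : Matrix (Fin M) (Fin M) ℂ)) =
    R.toBlocks₂₂ - Kᴴ * R.toBlocks₁₂ - (R.toBlocks₁₂)ᴴ * K + Kᴴ * R.toBlocks₁₁ * K := by
  have h21 : R.toBlocks₂₁ = (R.toBlocks₁₂)ᴴ := by
    ext i j
    have := congrFun (congrFun hR.eq (Sum.inr i)) (Sum.inl j)
    simpa [Matrix.toBlocks₂₁, Matrix.toBlocks₁₂, Matrix.conjTranspose_apply] using this.symm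
  conv_lhs => rw [← fromBlocks_toBlocks R]
  rw [conjTranspose_fromRows_eq_fromCols_conjTranspose,
    fromCols_mul_fromBlocks, fromCols_mul_fromRows, h21]
  simp only [Matrix.conjTranspose_neg, Matrix.conjTranspose_one, Matrix.neg_mul,
    Matrix.mul_neg, Matrix.one_mul, Matrix.mul_one, Matrix.mul_add, Matrix.add_mul,
    Matrix.mul_assoc]
  abel

lemma f1_aux {N M : ℕ}
    (R₁ R₂ : Matrix (Fin N ⊕ Fin M) (Fin N ⊕ Fin M) ℂ)
    (h₁ : R₁.PosSemidef) (h₂ : R₂.PosSemidef)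
    (h₁x : R₁.toBlocks₁₁.PosDef) (h₂x : R₂.toBlocks₁₁.PosDef)
    (hle : (R₁ - R₂).PosSemidef) :
    ((R₂.toBlocks₂₂ - (R₂.toBlocks₁₂)ᴴ * (R₂.toBlocks₁₁)⁻¹ * R₂.toBlocks₁₂).trace).re ≤
    ((R₁.toBlocks₂₂ - (R₁.toBlocks₁₂)ᴴ * (R₁.toBlocks₁₁)⁻¹ * R₁.toBlocks₁₂).trace).re := by
  set K : Matrix (Fin N) (Fin M) ℂ := (R₁.toBlocks₁₁)⁻¹ * R₁.toBlocks₁₂ with hK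
  set V : Matrix (Fin N ⊕ Fin M) (Fin M) ℂ := fromRows (-K) 1 with hV
  -- g R = Vᴴ R V
  have hg1 := g_eq R₁ h₁.1 K
  have hg2 := g_eq R₂ h₂.1 K
  have hU1 : IsUnit (R₁.toBlocks₁₁).det := isUnit_iff_ne_zero.mpr h₁x.det_pos.ne'
  have hU2 : IsUnit (R₂.toBlocks₁₁).det := isUnit_iff_ne_zero.mpr h₂x.det_pos.ne'
  have e1 := expand_lemma R₁.toBlocks₁₁ R₁.toBlocks₁₂ R₁.toBlocks₂₂ K h₁x.isHermitian hU1
  have e2 := expand_lemma R₂.toBlocks₁₁ R₂.toBlocks₁₂ R₂.toBlocks₂₂ K h₂x.isHermitian hU2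
  -- for R₁ the residual term vanishes
  have res1 : K - (R₁.toBlocks₁₁)⁻¹ * R₁.toBlocks₁₂ = 0 := by rw [hK]; exact sub_self _
  rw [res1] at e1
  simp only [Matrix.mul_zero, Matrix.zero_mul, Matrix.conjTranspose_zero, add_zero] at e1
  -- step 1 : f1 R₂ ≤ (Vᴴ R₂ V).trace.re
  have psd2 : ((K - (R₂.toBlocks₁₁)⁻¹ * R₂.toBlocks₁₂)ᴴ * R₂.toBlocks₁₁ *
      (K - (R₂.toBlocks₁₁)⁻¹ * R₂.toBlocks₁₂)).PosSemidef :=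
    h₂x.posSemidef.conjTranspose_mul_mul_same _
  have step1 : ((R₂.toBlocks₂₂ - (R₂.toBlocks₁₂)ᴴ * (R₂.toBlocks₁₁)⁻¹ * R₂.toBlocks₁₂).trace).re
      ≤ ((Vᴴ * R₂ * V).trace).re := by
    rw [hg2, e2, Matrix.trace_add, Complex.add_re]
    have := trace_re_nonneg' psd2
    linarith
  -- step 2 : (Vᴴ R₂ V).trace.re ≤ (Vᴴ R₁ V).trace.re
  have psdd : (Vᴴ * (R₁ - R₂) * V).PosSemidef := hle.conjTranspose_mul_mul_same V
  have step2 : ((Vᴴ * R₂ * V).trace).re ≤ ((Vᴴ * R₁ * V).trace).re := by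
    have hdiff : Vᴴ * (R₁ - R₂) * V = Vᴴ * R₁ * V - Vᴴ * R₂ * V := by
      rw [Matrix.mul_sub, Matrix.sub_mul]
    have := trace_re_nonneg' psdd
    rw [hdiff, Matrix.trace_sub, Complex.sub_re] at this
    linarith
  -- step 3 : (Vᴴ R₁ V).trace.re = f1 R₁
  have step3 : ((Vᴴ * R₁ * V).trace).re
      = ((R₁.toBlocks₂₂ - (R₁.toBlocks₁₂)ᴴ * (R₁.toBlocks₁₁)⁻¹ * R₁.toBlocks₁₂).trace).re := by
    rw [hg1, e1]
  linarith

/-- If `R₁ ⪰ R₂ ⪰ 0` are Hermitian positive semidefinite block matrices whose top-left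
blocks are positive definite, then `f1(R₁) ≥ f1(R₂)`. -/
theorem f1_monotone {N M : ℕ}
    (R₁ R₂ : Matrix (Fin N ⊕ Fin M) (Fin N ⊕ Fin M) ℂ)
    (h₁ : R₁.PosSemidef) (h₂ : R₂.PosSemidef)
    (h₁x : R₁.toBlocks₁₁.PosDef) (h₂x : R₂.toBlocks₁₁.PosDef)
    (hle : (R₁ - R₂).PosSemidef) :
    f1 R₂ ≤ f1 R₁ := by
  exact f1_aux R₁ R₂ h₁ h₂ h₁x h₂x hle
end

section
/- Let R̂ ∈ ℂ^{(N+M)×(N+M)} be Hermitian positive semidefinite with positive definite top-left N×N block R̂_x, and let θ₂ ≥ 1 ≥ θ₁ ≥ 0. Then (i) for every Hermitian R with θ₁R̂ ⪯ R ⪯ θ₂R̂ whose top-left block R_x is positive definite, f1(R) ≤ f1(θ₂R̂) = θ₂ f1(R̂); and (ii) the Wiener beamformer induced by the worst-case matrix θ₂R̂ coincides with the nominal Wiener beamformer: (θ₂R̂_xs)ᴴ (θ₂R̂_x)⁻¹ = R̂_xsᴴ R̂_x⁻¹. Hence the multiplicative-moment distributionally robust beamformer equals the nominal Wiener beamformer.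 -/
open Matrix
open scoped ComplexOrder

section Helpers

variable {N M : ℕ}

/-- The quadratic form `[-W; 1]ᴴ S [-W; 1]`. -/
noncomputable def qform (S : Matrix (Fin N ⊕ Fin M) (Fin N ⊕ Fin M) ℂ)
    (W : Matrix (Fin N) (Fin M) ℂ) : Matrix (Fin M) (Fin M) ℂ :=
  ((fromRows (-W) (1 : Matrix (Fin M) (Fin M) ℂ))ᴴ : Matrix (Fin M) (Fin N ⊕ Fin M) ℂ) * S
    * fromRows (-W) (1 : Matrix (Fin M) (Fin M) ℂ)

lemma qform_eq (S : Matrix (Fin N ⊕ Fin M) (Fin N ⊕ Fin M) ℂ) (W : Matrix (Fin N) (Fin M) ℂ) :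
    qform S W = Wᴴ * S.toBlocks₁₁ * W - Wᴴ * S.toBlocks₁₂ - S.toBlocks₂₁ * W + S.toBlocks₂₂ := by
  rw [qform]
  conv_lhs => rw [← fromBlocks_toBlocks S]
  rw [Matrix.mul_assoc, fromBlocks_mul_fromRows,
    conjTranspose_fromRows_eq_fromCols_conjTranspose, fromCols_mul_fromRows]
  simp [Matrix.mul_add, Matrix.add_mul, Matrix.mul_neg, Matrix.neg_mul, Matrix.mul_assoc]
  abel

lemma qform_sub (S T : Matrix (Fin N ⊕ Fin M) (Fin N ⊕ Fin M) ℂ) (W : Matrix (Fin N) (Fin M) ℂ) :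
    qform S W - qform T W = qform (S - T) W := by
  simp [qform, Matrix.sub_mul, Matrix.mul_sub]

lemma qform_posSemidef {S : Matrix (Fin N ⊕ Fin M) (Fin N ⊕ Fin M) ℂ}
    (hS : S.PosSemidef) (W : Matrix (Fin N) (Fin M) ℂ) : (qform S W).PosSemidef :=
  hS.conjTranspose_mul_mul_same _

lemma trace_re_nonneg {n : Type*} [Fintype n] [DecidableEq n] {S : Matrix n n ℂ}
    (hS : S.PosSemidef) : 0 ≤ S.trace.re := by
  rw [Matrix.trace]
  have h : ∀ i, 0 ≤ (S i i).re := by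
    intro i
    have := hS.diag_nonneg (i := i)
    rw [Complex.le_def] at this
    simpa using this.1
  simpa [Matrix.diag] using Finset.sum_nonneg fun i _ => h i

lemma toBlocks21_of_herm {S : Matrix (Fin N ⊕ Fin M) (Fin N ⊕ Fin M) ℂ} (hS : S.IsHermitian) :
    S.toBlocks₂₁ = (S.toBlocks₁₂)ᴴ := by
  ext i j
  simp only [toBlocks₂₁, toBlocks₁₂, conjTranspose_apply, of_apply]
  exact (hS.apply _ _).symm

lemma key_identity {S : Matrix (Fin N ⊕ Fin M) (Fin N ⊕ Fin M) ℂ} (hS : S.IsHermitian)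
    (hA : S.toBlocks₁₁.IsHermitian) (hU : IsUnit S.toBlocks₁₁.det)
    (W : Matrix (Fin N) (Fin M) ℂ) :
    qform S W = (S.toBlocks₂₂ - (S.toBlocks₁₂)ᴴ * (S.toBlocks₁₁)⁻¹ * S.toBlocks₁₂)
      + (W - (S.toBlocks₁₁)⁻¹ * S.toBlocks₁₂)ᴴ * S.toBlocks₁₁
        * (W - (S.toBlocks₁₁)⁻¹ * S.toBlocks₁₂) := by
  set A := S.toBlocks₁₁
  set B := S.toBlocks₁₂
  have hAinv : (A⁻¹)ᴴ = A⁻¹ := hA.inv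
  have hc : ∀ X : Matrix (Fin N) (Fin M) ℂ, A * (A⁻¹ * X) = X := fun X => by
    rw [← Matrix.mul_assoc, Matrix.mul_nonsing_inv _ hU, Matrix.one_mul]
  have hc' : ∀ X : Matrix (Fin N) (Fin M) ℂ, A⁻¹ * (A * X) = X := fun X => by
    rw [← Matrix.mul_assoc, Matrix.nonsing_inv_mul _ hU, Matrix.one_mul]
  rw [qform_eq, toBlocks21_of_herm hS]
  simp only [conjTranspose_sub, conjTranspose_mul, hAinv, Matrix.sub_mul, Matrix.mul_sub,
    Matrix.mul_assoc, hc, hc']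
  abel

lemma f1_le_qform {S : Matrix (Fin N ⊕ Fin M) (Fin N ⊕ Fin M) ℂ} (hS : S.IsHermitian)
    (hA : S.toBlocks₁₁.PosDef) (W : Matrix (Fin N) (Fin M) ℂ) :
    f1 S ≤ ((qform S W).trace).re := by
  rw [key_identity hS hA.isHermitian ((Matrix.isUnit_iff_isUnit_det _).1 hA.isUnit)]
  rw [Matrix.trace_add, Complex.add_re]
  have := trace_re_nonneg ((hA.posSemidef).conjTranspose_mul_mul_same
    (W - (S.toBlocks₁₁)⁻¹ * S.toBlocks₁₂))
  rw [f1]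
  linarith

lemma f1_eq_qform {S : Matrix (Fin N ⊕ Fin M) (Fin N ⊕ Fin M) ℂ} (hS : S.IsHermitian)
    (hA : S.toBlocks₁₁.IsHermitian) (hU : IsUnit S.toBlocks₁₁.det) :
    f1 S = ((qform S ((S.toBlocks₁₁)⁻¹ * S.toBlocks₁₂)).trace).re := by
  rw [key_identity hS hA hU]
  simp [f1]

end Helpers

/-- Over the multiplicative moment uncertainty set `θ₁R̂ ⪯ R ⪯ θ₂R̂` with
`θ₂ ≥ 1 ≥ θ₁ ≥ 0`: (i) the worst case of `f1` is attained at `θ₂R̂` and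
`f1(θ₂R̂) = θ₂ f1(R̂)`; (ii) the induced Wiener beamformer coincides with the nominal
one: `(θ₂R̂_xs)ᴴ (θ₂R̂_x)⁻¹ = R̂_xsᴴ R̂_x⁻¹`. -/
theorem multiplicative_moment_worst_case {N M : ℕ}
    (Rhat : Matrix (Fin N ⊕ Fin M) (Fin N ⊕ Fin M) ℂ)
    (hRhat : Rhat.PosSemidef) (hx : Rhat.toBlocks₁₁.PosDef)
    (θ₁ θ₂ : ℝ) (hθ₁0 : 0 ≤ θ₁) (hθ₁1 : θ₁ ≤ 1) (hθ₂ : 1 ≤ θ₂) :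
    (∀ R : Matrix (Fin N ⊕ Fin M) (Fin N ⊕ Fin M) ℂ, R.IsHermitian →
        (R - θ₁ • Rhat).PosSemidef → (θ₂ • Rhat - R).PosSemidef →
        R.toBlocks₁₁.PosDef →
        f1 R ≤ f1 (θ₂ • Rhat))
    ∧ f1 (θ₂ • Rhat) = θ₂ * f1 Rhat
    ∧ ((θ₂ • Rhat).toBlocks₁₂)ᴴ * ((θ₂ • Rhat).toBlocks₁₁)⁻¹
        = (Rhat.toBlocks₁₂)ᴴ * (Rhat.toBlocks₁₁)⁻¹ := by
  have hθne : (θ₂ : ℂ) ≠ 0 := by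
    exact_mod_cast (show (θ₂:ℝ) ≠ 0 by linarith)
  set A := Rhat.toBlocks₁₁ with hA
  set B := Rhat.toBlocks₁₂ with hB
  set C := Rhat.toBlocks₂₂ with hC
  have hb11 : (θ₂ • Rhat).toBlocks₁₁ = (θ₂ : ℂ) • A := by
    ext i j; simp [toBlocks₁₁, hA, Complex.real_smul]
  have hb12 : (θ₂ • Rhat).toBlocks₁₂ = (θ₂ : ℂ) • B := by
    ext i j; simp [toBlocks₁₂, hB, Complex.real_smul]
  have hb22 : (θ₂ • Rhat).toBlocks₂₂ = (θ₂ : ℂ) • C := by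
    ext i j; simp [toBlocks₂₂, hC, Complex.real_smul]
  have hAdet : IsUnit A.det := (Matrix.isUnit_iff_isUnit_det _).1 hx.isUnit
  have hinv : ((θ₂ : ℂ) • A)⁻¹ = (θ₂ : ℂ)⁻¹ • A⁻¹ := by
    apply Matrix.inv_eq_right_inv
    rw [Matrix.smul_mul, Matrix.mul_smul, smul_smul, mul_inv_cancel₀ hθne,
      Matrix.mul_nonsing_inv _ hAdet, one_smul]
  have hBf : ((θ₂ • Rhat).toBlocks₁₂)ᴴ * ((θ₂ • Rhat).toBlocks₁₁)⁻¹ = Bᴴ * A⁻¹ := by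
    rw [hb11, hb12, hinv, conjTranspose_smul, Matrix.smul_mul, Matrix.mul_smul, smul_smul]
    rw [Complex.star_def, Complex.conj_ofReal, mul_inv_cancel₀ hθne, one_smul]
  have hschur : (θ₂ • Rhat).toBlocks₂₂ - ((θ₂ • Rhat).toBlocks₁₂)ᴴ * ((θ₂ • Rhat).toBlocks₁₁)⁻¹
        * (θ₂ • Rhat).toBlocks₁₂ = (θ₂ : ℂ) • (C - Bᴴ * A⁻¹ * B) := by
    rw [hBf, hb12, hb22, Matrix.mul_smul, smul_sub]
  have hf1 : f1 (θ₂ • Rhat) = θ₂ * f1 Rhat := by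
    rw [f1, hschur, trace_smul, f1]
    simp [Complex.real_smul]
    exact Or.inl rfl
  refine ⟨?_, hf1, hBf⟩
  intro R hH hlow hup hRx
  have hSherm : (θ₂ • Rhat).IsHermitian := by
    have : θ₂ • Rhat = (θ₂ : ℂ) • Rhat := by
      ext i j; simp [Complex.real_smul]
    rw [IsHermitian, this, conjTranspose_smul, hRhat.1, Complex.star_def, Complex.conj_ofReal]
  have hSA_h : (θ₂ • Rhat).toBlocks₁₁.IsHermitian := by
    rw [hb11, IsHermitian, conjTranspose_smul, hx.isHermitian.eq, Complex.star_def,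
      Complex.conj_ofReal]
  have hSdet : IsUnit (θ₂ • Rhat).toBlocks₁₁.det := by
    rw [hb11, Matrix.det_smul]
    exact ((hθne.isUnit).pow _).mul hAdet
  set W₀ := ((θ₂ • Rhat).toBlocks₁₁)⁻¹ * (θ₂ • Rhat).toBlocks₁₂ with hW₀
  have h1 : f1 R ≤ ((qform R W₀).trace).re := f1_le_qform hH hRx W₀
  have h2 : ((qform R W₀).trace).re ≤ ((qform (θ₂ • Rhat) W₀).trace).re := by
    have hps := qform_posSemidef hup W₀
    have := trace_re_nonneg hps
    rw [← qform_sub, Matrix.trace_sub, Complex.sub_re] at this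
    linarith
  have h3 : f1 (θ₂ • Rhat) = ((qform (θ₂ • Rhat) W₀).trace).re :=
    f1_eq_qform hSherm hSA_h hSdet
  linarith
end

section
/- Fix W ∈ ℂ^{M×N}, a Hermitian positive semidefinite matrix F ∈ ℂ^{N×N}, and ε₀ ≥ 0. Then the supremum of Tr(W D_x Wᴴ) over all Hermitian matrices D_x with 0 ⪯ D_x ⪯ ε₀F equals ε₀ Tr(W F Wᴴ), attained at D_x = ε₀F. Consequently, for nominal matrices R̂_x, R̂_xs, R̂_s, the data-perturbed objective Tr(W (R̂_x + D_x) Wᴴ − W R̂_xs − R̂_xsᴴ Wᴴ + R̂_s + D_s), arising when the feature perturbation has second moment D_x and the label perturbation has second moment D_s with vanishing cross-correlations, satisfies sup over {D_x : 0 ⪯ D_x ⪯ ε₀F} equals g(W; R̂_x, R̂_xs, R̂_s) + ε₀ Tr(W F Wᴴ) + Tr(D_s); thus distributionally robust learning under diagonal data perturbation (F = I_N) again yields ridge regression and, for general F, Tikhonov regularization. -/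
open Matrix
open scoped ComplexOrder

/-- Data augmentation for linear regression: the supremum of `Tr(W D_x Wᴴ)` over
Hermitian `0 ⪯ D_x ⪯ ε₀F` equals `ε₀ Tr(W F Wᴴ)`, attained at `D_x = ε₀F`; consequently
the data-perturbed objective `Tr(W (R̂_x + D_x) Wᴴ − W R̂_xs − R̂_xsᴴ Wᴴ + R̂_s + D_s)`
has worst case `g(W; R̂_x, R̂_xs, R̂_s) + ε₀ Tr(W F Wᴴ) + Tr(D_s)`, i.e. ridge
(`F = I`) / Tikhonov regularization. -/
theorem data_augmentation_ridge {N M : ℕ}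
    (W : Matrix (Fin M) (Fin N) ℂ)
    (F : Matrix (Fin N) (Fin N) ℂ) (hF : F.PosSemidef)
    (ε₀ : ℝ) (hε : 0 ≤ ε₀)
    (Rhatx : Matrix (Fin N) (Fin N) ℂ) (Rhatxs : Matrix (Fin N) (Fin M) ℂ)
    (Rhats Ds : Matrix (Fin M) (Fin M) ℂ) :
    (∀ Dx : Matrix (Fin N) (Fin N) ℂ, Dx.PosSemidef → (ε₀ • F - Dx).PosSemidef →
        ((W * Dx * Wᴴ).trace).re ≤ ε₀ * ((W * F * Wᴴ).trace).re)
    ∧ ((W * (ε₀ • F) * Wᴴ).trace).re = ε₀ * ((W * F * Wᴴ).trace).re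
    ∧ (∀ Dx : Matrix (Fin N) (Fin N) ℂ, Dx.PosSemidef → (ε₀ • F - Dx).PosSemidef →
        ((W * (Rhatx + Dx) * Wᴴ - W * Rhatxs - Rhatxsᴴ * Wᴴ + Rhats + Ds).trace).re
          ≤ ((W * Rhatx * Wᴴ - W * Rhatxs - Rhatxsᴴ * Wᴴ + Rhats).trace).re
              + ε₀ * ((W * F * Wᴴ).trace).re + (Ds.trace).re)
    ∧ ((W * (Rhatx + ε₀ • F) * Wᴴ - W * Rhatxs - Rhatxsᴴ * Wᴴ + Rhats + Ds).trace).re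
        = ((W * Rhatx * Wᴴ - W * Rhatxs - Rhatxsᴴ * Wᴴ + Rhats).trace).re
            + ε₀ * ((W * F * Wᴴ).trace).re + (Ds.trace).re := by
  have hsmul : ((W * (ε₀ • F) * Wᴴ).trace).re = ε₀ * ((W * F * Wᴴ).trace).re := by
    have h : W * (ε₀ • F) * Wᴴ = ε₀ • (W * F * Wᴴ) := by
      rw [Matrix.mul_smul, Matrix.smul_mul]
    rw [h, Matrix.trace_smul]
    simp [Complex.real_smul]
  have key : ∀ Dx : Matrix (Fin N) (Fin N) ℂ, Dx.PosSemidef → (ε₀ • F - Dx).PosSemidef →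
      ((W * Dx * Wᴴ).trace).re ≤ ε₀ * ((W * F * Wᴴ).trace).re := by
    intro Dx _ hsub
    have h := trace_re_nonneg' (hsub.mul_mul_conjTranspose_same W)
    have heq : W * (ε₀ • F - Dx) * Wᴴ = W * (ε₀ • F) * Wᴴ - W * Dx * Wᴴ := by
      rw [Matrix.mul_sub, Matrix.sub_mul]
    rw [heq, Matrix.trace_sub, Complex.sub_re, hsmul] at h
    linarith
  refine ⟨key, hsmul, ?_, ?_⟩
  · intro Dx h1 h2
    have h := key Dx h1 h2
    have heq : W * (Rhatx + Dx) * Wᴴ - W * Rhatxs - Rhatxsᴴ * Wᴴ + Rhats + Ds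
        = (W * Rhatx * Wᴴ - W * Rhatxs - Rhatxsᴴ * Wᴴ + Rhats) + W * Dx * Wᴴ + Ds := by
      rw [Matrix.mul_add, Matrix.add_mul]; abel
    rw [heq, Matrix.trace_add, Matrix.trace_add, Complex.add_re, Complex.add_re]
    linarith
  · have heq : W * (Rhatx + ε₀ • F) * Wᴴ - W * Rhatxs - Rhatxsᴴ * Wᴴ + Rhats + Ds
        = (W * Rhatx * Wᴴ - W * Rhatxs - Rhatxsᴴ * Wᴴ + Rhats) + W * (ε₀ • F) * Wᴴ + Ds := by
      rw [Matrix.mul_add, Matrix.add_mul]; abel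
    rw [heq, Matrix.trace_add, Matrix.trace_add, Complex.add_re, Complex.add_re, hsmul]
end

section
/- Let R̂, R ∈ ℂ^{n×n} be Hermitian positive semidefinite and ε₀ ≥ 0. Then the Wasserstein-type constraint Tr(R + R̂ − 2 (R̂^{1/2} R R̂^{1/2})^{1/2}) ≤ ε₀² holds if and only if there exists a Hermitian positive semidefinite matrix U ∈ ℂ^{n×n} such that Tr(R + R̂ − 2U) ≤ ε₀² and the block matrix fromBlocks(R̂^{1/2} R R̂^{1/2}, U; U, I_n) is positive semidefinite. Consequently, the nonlinear semidefinite program maximizing Tr(R) subject to the Wasserstein constraint and the linear semidefinite program maximizing Tr(R) over pairs (R, U) subject to the linear constraints have the same optimal value and the same optimal matrices R. -/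
open Matrix
open scoped ComplexOrder

/-- The Hermitian positive semidefinite square root of a matrix
(junk value `0` if the matrix is not PSD). -/
noncomputable def psdSqrt {n : ℕ} (A : Matrix (Fin n) (Fin n) ℂ) :
    Matrix (Fin n) (Fin n) ℂ :=
  open scoped Classical in
  if h : A.PosSemidef then
    (h.1.eigenvectorUnitary : Matrix (Fin n) (Fin n) ℂ) *
      diagonal ((↑) ∘ (√·) ∘ h.1.eigenvalues) *
      (star h.1.eigenvectorUnitary : Matrix (Fin n) (Fin n) ℂ)
  else 0

noncomputable def Matrix.PosSemidef.sqrt {n : ℕ} {A : Matrix (Fin n) (Fin n) ℂ} (h : A.PosSemidef) :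
    Matrix (Fin n) (Fin n) ℂ :=
  (h.1.eigenvectorUnitary : Matrix (Fin n) (Fin n) ℂ) *
      diagonal ((↑) ∘ (√·) ∘ h.1.eigenvalues) *
      (star h.1.eigenvectorUnitary : Matrix (Fin n) (Fin n) ℂ)

lemma Matrix.PosSemidef.sqrt_eq_cfc {n : ℕ} {A : Matrix (Fin n) (Fin n) ℂ} (h : A.PosSemidef) :
    h.sqrt = cfc Real.sqrt A := by
  rw [h.1.cfc_eq, IsHermitian.cfc, Unitary.conjStarAlgAut_apply]; rfl

open scoped MatrixOrder in
lemma Matrix.PosSemidef.posSemidef_sqrt {n : ℕ} {A : Matrix (Fin n) (Fin n) ℂ} (h : A.PosSemidef) :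
    h.sqrt.PosSemidef := by
  rw [h.sqrt_eq_cfc, ← nonneg_iff_posSemidef]
  exact cfc_nonneg fun x _ => Real.sqrt_nonneg x

open scoped MatrixOrder in
lemma Matrix.PosSemidef.sqrt_mul_self {n : ℕ} {A : Matrix (Fin n) (Fin n) ℂ} (h : A.PosSemidef) :
    h.sqrt * h.sqrt = A := by
  have h0 : (0 : Matrix (Fin n) (Fin n) ℂ) ≤ A := nonneg_iff_posSemidef.mpr h
  rw [h.sqrt_eq_cfc, ← cfc_mul Real.sqrt Real.sqrt A]
  conv_rhs => rw [← cfc_id' ℝ A]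
  refine cfc_congr fun x hx => ?_
  exact Real.mul_self_sqrt (spectrum_nonneg_of_nonneg h0 hx)

private theorem trace_le_trace_sqrt (n : ℕ) (M U : Matrix (Fin n) (Fin n) ℂ) (hM : M.PosSemidef) (hU : U.PosSemidef)
    (hB : (fromBlocks M U U (1 : Matrix (Fin n) (Fin n) ℂ)).PosSemidef) :
    (U.trace).re ≤ (hM.sqrt.trace).re := by
  set S := hM.sqrt with hSdef
  have hS : S.PosSemidef := hM.posSemidef_sqrt
  set V : Matrix (Fin n) (Fin n) ℂ := (hS.1.eigenvectorUnitary : Matrix (Fin n) (Fin n) ℂ) with hVdef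
  set D : Matrix (Fin n) (Fin n) ℂ := diagonal (RCLike.ofReal ∘ hS.1.eigenvalues) with hDdef
  have hVV : Vᴴ * V = 1 := by
    rw [← Matrix.star_eq_conjTranspose]
    exact Matrix.mem_unitaryGroup_iff'.mp (hS.1.eigenvectorUnitary).2
  have hVV' : V * Vᴴ = 1 := by
    rw [← Matrix.star_eq_conjTranspose]
    exact Matrix.mem_unitaryGroup_iff.mp (hS.1.eigenvectorUnitary).2
  have hDSV : Vᴴ * S * V = D := by
    rw [← Matrix.star_eq_conjTranspose]
    have h := hS.1.conjStarAlgAut_star_eigenvectorUnitary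
    simp only [Unitary.conjStarAlgAut_apply, Unitary.coe_star, star_star] at h
    exact h
  have hMSS : S * S = M := hM.sqrt_mul_self
  have hMD : Vᴴ * M * V = D * D := by
    rw [← hMSS, ← hDSV]
    have h2 : Vᴴ * S * (V * Vᴴ) * S * V = Vᴴ * S * V * (Vᴴ * S * V) := by
      simp only [mul_assoc]
    have h3 : Vᴴ * S * (V * Vᴴ) * S * V = Vᴴ * (S * S) * V := by
      rw [hVV']; simp only [mul_one, mul_assoc]
    rw [← h2, h3]
  set W : Matrix (Fin n) (Fin n) ℂ := Vᴴ * U * V with hWdef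
  have hW : W.PosSemidef := hU.conjTranspose_mul_mul_same V
  have hB2 : (fromBlocks (D * D) W W (1 : Matrix (Fin n) (Fin n) ℂ)).PosSemidef := by
    have h := hB.conjTranspose_mul_mul_same (fromBlocks V 0 0 V)
    have he : (fromBlocks V 0 0 V)ᴴ * fromBlocks M U U (1 : Matrix (Fin n) (Fin n) ℂ) *
        fromBlocks V 0 0 V = fromBlocks (D * D) W W 1 := by
      rw [Matrix.fromBlocks_conjTranspose, Matrix.fromBlocks_multiply, Matrix.fromBlocks_multiply]
      simp only [conjTranspose_zero, mul_zero, zero_mul, add_zero, zero_add, mul_one, one_mul]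
      rw [hMD, ← hWdef, hVV]
    rwa [he] at h
  set w : Fin n → ℝ := fun i => (W i i).re with hwdef
  have hWdiag : ∀ i, W i i = (w i : ℂ) := fun i => (hW.1.coe_re_apply_self i).symm
  have hwnonneg : ∀ i, 0 ≤ w i := by
    intro i
    have h0 : 0 ≤ W i i := by
      exact hW.diag_nonneg
    exact (Complex.le_def.mp h0).1
  set E : Matrix (Fin n) (Fin n) ℂ := diagonal (fun i => (w i : ℂ)) with hEdef
  have hE : E.PosSemidef :=
    Matrix.posSemidef_diagonal_iff.mpr fun i => Complex.zero_le_real.mpr (hwnonneg i)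
  have hEH : Eᴴ = E := hE.1
  have hK : (D * D - W * E - E * W + E * E).PosSemidef := by
    have h := hB2.conjTranspose_mul_mul_same (fromRows (1 : Matrix (Fin n) (Fin n) ℂ) (-E))
    have he : (fromRows (1 : Matrix (Fin n) (Fin n) ℂ) (-E))ᴴ *
        fromBlocks (D * D) W W (1 : Matrix (Fin n) (Fin n) ℂ) *
        (fromRows (1 : Matrix (Fin n) (Fin n) ℂ) (-E))
        = D * D - W * E - E * W + E * E := by
      rw [Matrix.conjTranspose_fromRows_eq_fromCols_conjTranspose, Matrix.mul_assoc,
        Matrix.fromBlocks_mul_fromRows, Matrix.fromCols_mul_fromRows]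
      simp only [conjTranspose_one, conjTranspose_neg, hEH, mul_one, one_mul, mul_neg,
        neg_mul, neg_neg]
      noncomm_ring
    rwa [he] at h
  set s : Fin n → ℝ := hS.1.eigenvalues with hsdef
  have hsnonneg : ∀ i, 0 ≤ s i := fun i => hS.eigenvalues_nonneg i
  have hws : ∀ i, w i ≤ s i := by
    intro i
    have h0 : 0 ≤ (D * D - W * E - E * W + E * E) i i := by
      exact hK.diag_nonneg
    have hDD : (D * D) i i = ((s i : ℂ) * (s i : ℂ)) := by
      rw [hDdef, Matrix.diagonal_mul_diagonal, Matrix.diagonal_apply_eq]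
      rfl
    have hentry : (D * D - W * E - E * W + E * E) i i = ((s i * s i - w i * w i : ℝ) : ℂ) := by
      simp only [Matrix.add_apply, Matrix.sub_apply, hDD, hEdef, Matrix.mul_diagonal,
        Matrix.diagonal_mul, Matrix.diagonal_apply_eq, hWdiag i]
      push_cast
      ring
    rw [hentry] at h0
    have hsq : w i * w i ≤ s i * s i := by
      rw [Complex.zero_le_real] at h0
      linarith
    nlinarith [hwnonneg i, hsnonneg i]
  have htrU : U.trace = W.trace := by
    rw [hWdef, Matrix.trace_mul_cycle, ← Matrix.star_eq_conjTranspose,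
      Matrix.mem_unitaryGroup_iff.mp (hS.1.eigenvectorUnitary).2, one_mul]
  have htrS : S.trace = D.trace := by
    rw [← hDSV, Matrix.trace_mul_cycle, hVV', one_mul]
  rw [htrU, htrS, Matrix.trace, Matrix.trace]
  simp only [Complex.re_sum]
  apply Finset.sum_le_sum
  intro i _
  rw [Matrix.diag_apply, Matrix.diag_apply, hDdef, Matrix.diagonal_apply_eq]
  simpa using hws i


private lemma psdSqrt_eq {n : ℕ} {A : Matrix (Fin n) (Fin n) ℂ} (h : A.PosSemidef) :
    psdSqrt A = h.sqrt := by
  rw [psdSqrt, dif_pos h]; rfl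

/-- Linear SDP reformulation of the Wasserstein constraint: for Hermitian PSD `R̂` and
`R`, `Tr(R + R̂ − 2(R̂^{1/2} R R̂^{1/2})^{1/2}) ≤ ε₀²` iff there is a Hermitian PSD `U` with
`Tr(R + R̂ − 2U) ≤ ε₀²` and `fromBlocks(R̂^{1/2} R R̂^{1/2}, U; U, I) ⪰ 0`. Consequently the
nonlinear SDP maximizing `Tr R` under the Wasserstein constraint and the linear SDP over
pairs `(R, U)` have the same feasible matrices `R` (hence the same optimal value and the
same optimal matrices). -/
theorem wasserstein_sdp_reformulation (n : ℕ)
    (Rhat : Matrix (Fin n) (Fin n) ℂ) (hRhat : Rhat.PosSemidef)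
    (ε₀ : ℝ) (hε : 0 ≤ ε₀) :
    (∀ R : Matrix (Fin n) (Fin n) ℂ, R.PosSemidef →
      (((R + Rhat - (2 : ℝ) • psdSqrt (psdSqrt Rhat * R * psdSqrt Rhat)).trace).re ≤ ε₀ ^ 2
        ↔ ∃ U : Matrix (Fin n) (Fin n) ℂ, U.PosSemidef ∧
            ((R + Rhat - (2 : ℝ) • U).trace).re ≤ ε₀ ^ 2 ∧
            (Matrix.fromBlocks (psdSqrt Rhat * R * psdSqrt Rhat) U U
              (1 : Matrix (Fin n) (Fin n) ℂ)).PosSemidef))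
    ∧ { R : Matrix (Fin n) (Fin n) ℂ | R.PosSemidef ∧
          ((R + Rhat - (2 : ℝ) • psdSqrt (psdSqrt Rhat * R * psdSqrt Rhat)).trace).re
            ≤ ε₀ ^ 2 }
        = { R : Matrix (Fin n) (Fin n) ℂ | R.PosSemidef ∧
            ∃ U : Matrix (Fin n) (Fin n) ℂ, U.PosSemidef ∧
              ((R + Rhat - (2 : ℝ) • U).trace).re ≤ ε₀ ^ 2 ∧
              (Matrix.fromBlocks (psdSqrt Rhat * R * psdSqrt Rhat) U U
                (1 : Matrix (Fin n) (Fin n) ℂ)).PosSemidef } := by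
  have main : ∀ R : Matrix (Fin n) (Fin n) ℂ, R.PosSemidef →
      (((R + Rhat - (2 : ℝ) • psdSqrt (psdSqrt Rhat * R * psdSqrt Rhat)).trace).re ≤ ε₀ ^ 2
        ↔ ∃ U : Matrix (Fin n) (Fin n) ℂ, U.PosSemidef ∧
            ((R + Rhat - (2 : ℝ) • U).trace).re ≤ ε₀ ^ 2 ∧
            (Matrix.fromBlocks (psdSqrt Rhat * R * psdSqrt Rhat) U U
              (1 : Matrix (Fin n) (Fin n) ℂ)).PosSemidef) := by
    intro R hR
    have hqH : (psdSqrt Rhat)ᴴ = psdSqrt Rhat := by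
      rw [psdSqrt_eq hRhat]; exact hRhat.posSemidef_sqrt.1
    have hM : (psdSqrt Rhat * R * psdSqrt Rhat).PosSemidef := by
      have h := hR.conjTranspose_mul_mul_same (psdSqrt Rhat)
      rwa [hqH] at h
    have hMsq : psdSqrt (psdSqrt Rhat * R * psdSqrt Rhat) = hM.sqrt := psdSqrt_eq hM
    have htr : ∀ X : Matrix (Fin n) (Fin n) ℂ,
        ((R + Rhat - (2 : ℝ) • X).trace).re = ((R + Rhat).trace).re - 2 * (X.trace).re := by
      intro X
      rw [Matrix.trace_sub, Matrix.trace_smul]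
      simp [Complex.smul_re]
    constructor
    · intro h
      refine ⟨hM.sqrt, hM.posSemidef_sqrt, by rwa [hMsq] at h, ?_⟩
      have hSH : hM.sqrt ᴴ = hM.sqrt := hM.posSemidef_sqrt.1
      have hSS : hM.sqrt * hM.sqrt = psdSqrt Rhat * R * psdSqrt Rhat := hM.sqrt_mul_self
      have he : fromRows hM.sqrt (1 : Matrix (Fin n) (Fin n) ℂ) *
          (fromRows hM.sqrt (1 : Matrix (Fin n) (Fin n) ℂ))ᴴ
          = fromBlocks (psdSqrt Rhat * R * psdSqrt Rhat) hM.sqrt hM.sqrt 1 := by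
        rw [Matrix.conjTranspose_fromRows_eq_fromCols_conjTranspose,
          Matrix.fromRows_mul_fromCols, hSH, conjTranspose_one, hSS, mul_one, one_mul, mul_one]
      rw [← he]
      exact Matrix.posSemidef_self_mul_conjTranspose _
    · rintro ⟨U, hU, htrU, hblock⟩
      rw [hMsq, htr]
      rw [htr] at htrU
      have hle : (U.trace).re ≤ (hM.sqrt.trace).re :=
        trace_le_trace_sqrt n (psdSqrt Rhat * R * psdSqrt Rhat) U hM hU hblock
      linarith
  refine ⟨main, ?_⟩
  ext R
  simp only [Set.mem_setOf_eq]
  exact and_congr_right fun hR => main R hR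
end

section
/- Let R_x ∈ ℂ^{N×N} be Hermitian positive semidefinite, R_xs ∈ ℂ^{N×M}, R_s ∈ ℂ^{M×M} Hermitian, W′ ∈ ℂ^{M×N}, and λ > 0 (so that R_x + λI_N is positive definite). Then the unique minimizer over W ∈ ℂ^{M×N} of the multi-frame objective g(W; R_x, R_xs, R_s) + λ Tr((W − W′)(W − W′)ᴴ) is W⋆ = (R_xs + λ W′ᴴ)ᴴ (R_x + λ I_N)⁻¹. -/
open Matrix
open scoped ComplexOrder

/-- Real scalar multiplication on complex matrices agrees with complex scalar
multiplication by the coercion. -/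
lemma mfw_real_smul_eq {m n : Type*} (lam : ℝ) (X : Matrix m n ℂ) :
    lam • X = (lam : ℂ) • X := by
  ext i j; simp [Complex.real_smul]

/-- `Rx + λ • 1` is positive definite when `Rx ⪰ 0` and `λ > 0`. -/
lemma mfw_posDef_A {N : ℕ} (Rx : Matrix (Fin N) (Fin N) ℂ) (hRx : Rx.PosSemidef)
    {lam : ℝ} (hlam : 0 < lam) :
    (Rx + lam • (1 : Matrix (Fin N) (Fin N) ℂ)).PosDef := by
  rw [mfw_real_smul_eq]
  refine posDef_iff_dotProduct_mulVec.mpr ⟨?_, ?_⟩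
  · have : ((lam:ℂ) • (1 : Matrix (Fin N) (Fin N) ℂ)).IsHermitian := by
      simp [Matrix.IsHermitian, conjTranspose_smul, Complex.conj_ofReal]
    exact hRx.1.add this
  · intro x hx
    have h1 := hRx.dotProduct_mulVec_nonneg x
    have h2 : 0 < (lam:ℂ) * (star x ⬝ᵥ x) :=
      mul_pos (by exact_mod_cast hlam) (dotProduct_star_self_pos_iff.mpr hx)
    calc (0:ℂ) < star x ⬝ᵥ (Rx *ᵥ x) + (lam:ℂ) * (star x ⬝ᵥ x) :=
          lt_add_of_nonneg_of_lt h1 h2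
      _ = star x ⬝ᵥ ((Rx + (lam:ℂ) • 1) *ᵥ x) := by
          simp [add_mulVec, dotProduct_add, smul_mulVec, smul_eq_mul,
            dotProduct_smul]

lemma mfw_diag_quad {N M : ℕ} (A : Matrix (Fin N) (Fin N) ℂ)
    (Mt : Matrix (Fin M) (Fin N) ℂ) (i : Fin M) :
    (Mt * A * Mtᴴ) i i = star (star (Mt i)) ⬝ᵥ (A *ᵥ star (Mt i)) := by
  simp only [mul_apply, conjTranspose_apply, dotProduct, mulVec, star_star,
    Pi.star_apply, Finset.mul_sum, Finset.sum_mul, dotProduct]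
  rw [Finset.sum_comm]
  congr 1; ext j; congr 1; ext k; ring

/-- For a positive definite `A`, `Re Tr(M A Mᴴ) ≥ 0` with equality iff `M = 0`. -/
lemma mfw_trace_quad_key {N M : ℕ} {A : Matrix (Fin N) (Fin N) ℂ} (hA : A.PosDef)
    (Mt : Matrix (Fin M) (Fin N) ℂ) :
    0 ≤ ((Mt * A * Mtᴴ).trace).re ∧
      (((Mt * A * Mtᴴ).trace).re = 0 → Mt = 0) := by
  have hterm : ∀ i, 0 ≤ ((Mt * A * Mtᴴ) i i).re := by
    intro i
    rw [mfw_diag_quad]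
    have := hA.posSemidef.dotProduct_mulVec_nonneg (star (Mt i))
    exact (Complex.le_def.mp this).1
  have htr : ((Mt * A * Mtᴴ).trace).re = ∑ i, ((Mt * A * Mtᴴ) i i).re := by
    simp [Matrix.trace, Matrix.diag, Complex.re_sum]
  constructor
  · rw [htr]; exact Finset.sum_nonneg fun i _ => hterm i
  · intro h0
    rw [htr] at h0
    have hz := (Finset.sum_eq_zero_iff_of_nonneg (fun i _ => hterm i)).mp h0
    ext i j
    by_contra hne
    have hrow : star (Mt i) ≠ 0 := by
      intro hr
      apply hne
      have := congr_fun hr j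
      simpa using congrArg star this
    have hpos := hA.dotProduct_mulVec_pos hrow
    have : 0 < ((Mt * A * Mtᴴ) i i).re := by
      rw [mfw_diag_quad]
      exact (Complex.lt_def.mp hpos).1
    exact absurd (hz i (Finset.mem_univ i)) (ne_of_gt this)

/-- Completing the square for the quadratic matrix form. -/
lemma mfw_complete_square {n m : Type*} [Fintype n] [Fintype m] [DecidableEq n]
    (A : Matrix n n ℂ) (hA : A.IsHermitian) (hdet : IsUnit A.det)
    (B : Matrix n m ℂ) (W : Matrix m n ℂ) :
    W * A * Wᴴ - W * B - Bᴴ * Wᴴ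
      = (W - Bᴴ * A⁻¹) * A * (W - Bᴴ * A⁻¹)ᴴ - Bᴴ * A⁻¹ * B := by
  have h1 : Bᴴ * A⁻¹ * A = Bᴴ := by
    rw [Matrix.mul_assoc, Matrix.nonsing_inv_mul A hdet, Matrix.mul_one]
  have hWsH : (Bᴴ * A⁻¹)ᴴ = A⁻¹ * B := by
    rw [conjTranspose_mul, conjTranspose_conjTranspose,
      Matrix.conjTranspose_nonsing_inv, hA.eq]
  simp only [conjTranspose_sub, Matrix.sub_mul, Matrix.mul_sub]
  have hWB : W * A * (A⁻¹ * B) = W * B := by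
    rw [← Matrix.mul_assoc, Matrix.mul_assoc W A A⁻¹,
      Matrix.mul_nonsing_inv A hdet, Matrix.mul_one]
  rw [h1, hWsH, hWB, ← Matrix.mul_assoc Bᴴ A⁻¹ B]
  abel

lemma mfw_obj_trace_eq {N M : ℕ}
    (Rx : Matrix (Fin N) (Fin N) ℂ) (Rxs : Matrix (Fin N) (Fin M) ℂ)
    (Rs : Matrix (Fin M) (Fin M) ℂ) (W' : Matrix (Fin M) (Fin N) ℂ) (lam : ℝ)
    (W : Matrix (Fin M) (Fin N) ℂ) :
    (W * Rx * Wᴴ - W * Rxs - Rxsᴴ * Wᴴ + Rs).trace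
        + (lam : ℂ) * ((W - W') * (W - W')ᴴ).trace
      = (W * (Rx + lam • (1 : Matrix (Fin N) (Fin N) ℂ)) * Wᴴ
          - W * (Rxs + lam • W'ᴴ) - (Rxs + lam • W'ᴴ)ᴴ * Wᴴ).trace
        + Rs.trace + (lam : ℂ) * (W' * W'ᴴ).trace := by
  rw [mfw_real_smul_eq lam (1 : Matrix (Fin N) (Fin N) ℂ), mfw_real_smul_eq lam W'ᴴ]
  simp only [Matrix.mul_add, Matrix.add_mul, Matrix.mul_sub, Matrix.sub_mul,
    conjTranspose_add, conjTranspose_sub, conjTranspose_smul,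
    conjTranspose_conjTranspose, Matrix.mul_smul, Matrix.smul_mul,
    Matrix.mul_one, trace_add, trace_sub, trace_smul, smul_eq_mul,
    Complex.star_def, Complex.conj_ofReal]
  ring

/-- The multi-frame beamforming objective
`g(W; R_x, R_xs, R_s) + λ Tr((W − W′)(W − W′)ᴴ)` (real part). -/
noncomputable def multiFrameObj {N M : ℕ}
    (Rx : Matrix (Fin N) (Fin N) ℂ) (Rxs : Matrix (Fin N) (Fin M) ℂ)
    (Rs : Matrix (Fin M) (Fin M) ℂ) (W' : Matrix (Fin M) (Fin N) ℂ) (lam : ℝ)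
    (W : Matrix (Fin M) (Fin N) ℂ) : ℝ :=
  ((W * Rx * Wᴴ - W * Rxs - Rxsᴴ * Wᴴ + Rs).trace).re
    + lam * (((W - W') * (W - W')ᴴ).trace).re

/-- Multi-frame Wiener beamforming: with `R_x ⪰ 0` Hermitian PSD, `R_s` Hermitian and
`λ > 0`, the unique minimizer of `g(W; R_x, R_xs, R_s) + λ Tr((W − W′)(W − W′)ᴴ)` is
`W⋆ = (R_xs + λW′ᴴ)ᴴ (R_x + λI)⁻¹`. -/
theorem multi_frame_wiener_unique_minimizer {N M : ℕ}
    (Rx : Matrix (Fin N) (Fin N) ℂ) (hRx : Rx.PosSemidef)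
    (Rxs : Matrix (Fin N) (Fin M) ℂ)
    (Rs : Matrix (Fin M) (Fin M) ℂ) (hRs : Rs.IsHermitian)
    (W' : Matrix (Fin M) (Fin N) ℂ) (lam : ℝ) (hlam : 0 < lam) :
    ∀ W : Matrix (Fin M) (Fin N) ℂ,
      multiFrameObj Rx Rxs Rs W' lam
          ((Rxs + lam • W'ᴴ)ᴴ * (Rx + lam • (1 : Matrix (Fin N) (Fin N) ℂ))⁻¹)
        ≤ multiFrameObj Rx Rxs Rs W' lam W
      ∧ (multiFrameObj Rx Rxs Rs W' lam W
            = multiFrameObj Rx Rxs Rs W' lam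
                ((Rxs + lam • W'ᴴ)ᴴ * (Rx + lam • (1 : Matrix (Fin N) (Fin N) ℂ))⁻¹)
          → W = (Rxs + lam • W'ᴴ)ᴴ * (Rx + lam • (1 : Matrix (Fin N) (Fin N) ℂ))⁻¹) := by
  set A : Matrix (Fin N) (Fin N) ℂ := Rx + lam • (1 : Matrix (Fin N) (Fin N) ℂ) with hAdef
  set B : Matrix (Fin N) (Fin M) ℂ := Rxs + lam • W'ᴴ with hBdef
  have hApd : A.PosDef := mfw_posDef_A Rx hRx hlam
  have hdet : IsUnit A.det := isUnit_iff_ne_zero.mpr (ne_of_gt hApd.det_pos)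
  set Ws : Matrix (Fin M) (Fin N) ℂ := Bᴴ * A⁻¹ with hWsdef
  -- objective in completed-square form
  have hobj : ∀ V : Matrix (Fin M) (Fin N) ℂ,
      multiFrameObj Rx Rxs Rs W' lam V
        = (((V - Ws) * A * (V - Ws)ᴴ).trace).re
          + (- ((Bᴴ * A⁻¹ * B).trace).re + (Rs.trace).re
              + lam * ((W' * W'ᴴ).trace).re) := by
    intro V
    have h1 := mfw_obj_trace_eq Rx Rxs Rs W' lam V
    have h2 := mfw_complete_square A hApd.isHermitian hdet B V
    have h3 : multiFrameObj Rx Rxs Rs W' lam V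
        = ((V * Rx * Vᴴ - V * Rxs - Rxsᴴ * Vᴴ + Rs).trace
            + (lam : ℂ) * ((V - W') * (V - W')ᴴ).trace).re := by
      simp [multiFrameObj, Complex.add_re, Complex.re_ofReal_mul]
    rw [h3, h1, ← hAdef, ← hBdef, h2, ← hWsdef]
    simp only [trace_sub, trace_add, Complex.add_re, Complex.sub_re,
      Complex.re_ofReal_mul]
    ring
  intro W
  have hkey := mfw_trace_quad_key hApd (W - Ws)
  have hWs0 : multiFrameObj Rx Rxs Rs W' lam Ws
      = (- ((Bᴴ * A⁻¹ * B).trace).re + (Rs.trace).re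
          + lam * ((W' * W'ᴴ).trace).re) := by
    rw [hobj Ws]
    simp
  constructor
  · rw [hobj W, hWs0]
    linarith [hkey.1]
  · intro heq
    rw [hobj W, hWs0] at heq
    have h0 : (((W - Ws) * A * (W - Ws)ᴴ).trace).re = 0 := by linarith
    have := hkey.2 h0
    have : W = Ws := by
      have h := sub_eq_zero.mp this
      exact h
    exact this
end

section
/- Fix W ∈ ℝ^{m×L}, a symmetric nominal matrix R̂_z ∈ ℝ^{L×L}, a symmetric positive semidefinite matrix F ∈ ℝ^{L×L}, matrices R̂_zs ∈ ℝ^{L×m} and symmetric R̂_s ∈ ℝ^{m×m}, and ε₀ ≥ 0 with R̂_z − ε₀F positive semidefinite. Then the supremum over all symmetric R_z with R̂_z − ε₀F ⪯ R_z ⪯ R̂_z + ε₀F of Tr(W R_z Wᵀ − W R̂_zs − R̂_zsᵀ Wᵀ + R̂_s) equals Tr(W R̂_z Wᵀ − W R̂_zs − R̂_zsᵀ Wᵀ + R̂_s) + ε₀ Tr(W F Wᵀ), attained at R_z = R̂_z + ε₀F. In particular, with F = I_L the distributionally robust RKHS estimation problem is exactly kernel ridge regression (squared-Frobenius-norm regularization),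 and for general F ⪰ 0 it is kernel Tikhonov regularization. -/
open Matrix

private lemma psd_trace_nonneg {n : ℕ} {M : Matrix (Fin n) (Fin n) ℝ}
    (hM : M.PosSemidef) : 0 ≤ M.trace := by
  have h : ∀ i, 0 ≤ M i i := by
    intro i
    exact hM.diag_nonneg
  exact Finset.sum_nonneg fun i _ => h i

/-- Kernel ridge regression / kernel Tikhonov regularization as distributional
robustness: over the uncertainty set `R̂_z − ε₀F ⪯ R_z ⪯ R̂_z + ε₀F` (symmetric `R_z`),
the supremum of `Tr(W R_z Wᵀ − W R̂_zs − R̂_zsᵀ Wᵀ + R̂_s)` equals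
`Tr(W R̂_z Wᵀ − W R̂_zs − R̂_zsᵀ Wᵀ + R̂_s) + ε₀ Tr(W F Wᵀ)`, attained at
`R_z = R̂_z + ε₀F`. -/
theorem kernel_ridge_distributionally_robust {m L : ℕ}
    (W : Matrix (Fin m) (Fin L) ℝ)
    (Rhatz : Matrix (Fin L) (Fin L) ℝ) (hRhatz : Rhatz.IsSymm)
    (F : Matrix (Fin L) (Fin L) ℝ) (hF : F.PosSemidef)
    (Rhatzs : Matrix (Fin L) (Fin m) ℝ)
    (Rhats : Matrix (Fin m) (Fin m) ℝ) (hRhats : Rhats.IsSymm)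
    (ε₀ : ℝ) (hε : 0 ≤ ε₀)
    (hlow : (Rhatz - ε₀ • F).PosSemidef) :
    (∀ Rz : Matrix (Fin L) (Fin L) ℝ, Rz.IsSymm →
        (Rz - (Rhatz - ε₀ • F)).PosSemidef → ((Rhatz + ε₀ • F) - Rz).PosSemidef →
        (W * Rz * Wᵀ - W * Rhatzs - Rhatzsᵀ * Wᵀ + Rhats).trace
          ≤ (W * Rhatz * Wᵀ - W * Rhatzs - Rhatzsᵀ * Wᵀ + Rhats).trace
              + ε₀ * (W * F * Wᵀ).trace)
    ∧ (W * (Rhatz + ε₀ • F) * Wᵀ - W * Rhatzs - Rhatzsᵀ * Wᵀ + Rhats).trace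
        = (W * Rhatz * Wᵀ - W * Rhatzs - Rhatzsᵀ * Wᵀ + Rhats).trace
            + ε₀ * (W * F * Wᵀ).trace := by
  have key : ∀ Rz : Matrix (Fin L) (Fin L) ℝ,
      ((Rhatz + ε₀ • F) - Rz).PosSemidef →
      (W * Rz * Wᵀ).trace ≤ (W * Rhatz * Wᵀ).trace + ε₀ * (W * F * Wᵀ).trace := by
    intro Rz hup
    have h1 : (W * ((Rhatz + ε₀ • F) - Rz) * Wᴴ).PosSemidef :=
      hup.mul_mul_conjTranspose_same W
    have h2 : 0 ≤ (W * ((Rhatz + ε₀ • F) - Rz) * Wᴴ).trace := psd_trace_nonneg h1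
    have hconj : (Wᴴ : Matrix (Fin L) (Fin m) ℝ) = Wᵀ := conjTranspose_eq_transpose_of_trivial W
    rw [hconj] at h2
    have hexp : (W * ((Rhatz + ε₀ • F) - Rz) * Wᵀ).trace
        = (W * Rhatz * Wᵀ).trace + ε₀ * (W * F * Wᵀ).trace - (W * Rz * Wᵀ).trace := by
      rw [Matrix.mul_sub, Matrix.mul_add, Matrix.sub_mul, Matrix.add_mul,
        Matrix.mul_smul, Matrix.smul_mul, trace_sub, trace_add, trace_smul]
      simp
    linarith [h2, hexp ▸ h2]
  constructor
  · intro Rz _ _ hup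
    have := key Rz hup
    simp only [Matrix.trace_add, Matrix.trace_sub]
    linarith
  · have hexp : (W * (Rhatz + ε₀ • F) * Wᵀ).trace
        = (W * Rhatz * Wᵀ).trace + ε₀ * (W * F * Wᵀ).trace := by
      rw [Matrix.mul_add, Matrix.add_mul, Matrix.mul_smul, Matrix.smul_mul,
        trace_add, trace_smul]
      simp
    simp only [Matrix.trace_add, Matrix.trace_sub]
    linarith
end
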